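/- Let a loopless digraph on n vertices with m pairwise distinct edges be given by an injective map e : Fin m → Fin n × Fin n with (e k).1 ≠ (e k).2 for all k, with incidence matrix B and initial-incidence matrix B^i. Suppose z ∈ {0,1}^m is nonzero, satisfies B z = 0 and B^i z ≤ 1 entrywise, and z cannot be written as z = z₁ + z₂ with z₁, z₂ ∈ {0,1}^m both nonzero and B z₁ = B z₂ = 0. Then the support of z is the edge set of a directed simple cycle: there exist l ≥ 2 and injective maps v : Fin l → Fin n and c : Fin l → Fin m with e(c t) = (v t, v (t+1 mod l)) for all t, such that z_k = 1 if and only if k is in the range of c. -/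

import Mathlib

/-- The incidence matrix of a digraph on `n` vertices with edge map `e`:
`B(v,k) = 1` if `v` is the initial vertex of edge `k`, `−1` if it is the terminal
vertex, and `0` otherwise. -/
def Bmat (n m : ℕ) (e : Fin m → Fin n × Fin n) : Matrix (Fin n) (Fin m) ℤ :=
  fun v k => if v = (e k).1 then 1 else if v = (e k).2 then -1 else 0

/-- The initial-incidence matrix: `Bⁱ(v,k) = 1` if `v` is the initial vertex of edge `k`,
and `0` otherwise. -/
def Bimat (n m : ℕ) (e : Fin m → Fin n × Fin n) : Matrix (Fin n) (Fin m) ℤ :=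
  fun v k => if v = (e k).1 then 1 else 0

/-- in a loopless digraph with pairwise distinct edges, if a nonzero
`z ∈ {0,1}^m` satisfies `B z = 0` and `Bⁱ z ≤ 1` entrywise, and `z` is not a sum of two
nonzero `{0,1}`-vectors each in the kernel of `B`, then the support of `z` is the edge
set of a directed simple cycle. -/
theorem support_is_simple_cycle (n m : ℕ)
    (e : Fin m → Fin n × Fin n) (he : Function.Injective e)
    (hloop : ∀ k, (e k).1 ≠ (e k).2)
    (z : Fin m → ℤ) (hz01 : ∀ k, z k = 0 ∨ z k = 1) (hzne : z ≠ 0)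
    (hBz : (Bmat n m e).mulVec z = 0)
    (hBi : ∀ u : Fin n, (Bimat n m e).mulVec z u ≤ 1)
    (hind : ¬ ∃ z₁ z₂ : Fin m → ℤ,
      (∀ k, z₁ k = 0 ∨ z₁ k = 1) ∧ (∀ k, z₂ k = 0 ∨ z₂ k = 1) ∧
      z₁ ≠ 0 ∧ z₂ ≠ 0 ∧ z = z₁ + z₂ ∧
      (Bmat n m e).mulVec z₁ = 0 ∧ (Bmat n m e).mulVec z₂ = 0) :
    ∃ (l : ℕ) (hl : 2 ≤ l) (v : Fin l → Fin n) (c : Fin l → Fin m),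
      Function.Injective v ∧ Function.Injective c ∧
      (∀ t : Fin l, e (c t) = (v t, v ⟨(t.1 + 1) % l, Nat.mod_lt _ (by omega)⟩)) ∧
      (∀ k, z k = 1 ↔ ∃ t, c t = k) := by
    classical
  have hz0le : ∀ k, 0 ≤ z k := fun k => by rcases hz01 k with h | h <;> simp [h]
  -- balance: out-sum = in-sum at each vertex
  have hbal : ∀ u : Fin n, (∑ k, if u = (e k).1 then z k else 0)
      = ∑ k, if u = (e k).2 then z k else 0 := by
    intro u
    have h := congrFun hBz u
    simp only [Matrix.mulVec, dotProduct, Bmat, Pi.zero_apply] at h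
    have key : ∀ k : Fin m,
        (if u = (e k).1 then (1:ℤ) else if u = (e k).2 then -1 else 0) * z k
        = (if u = (e k).1 then z k else 0) - (if u = (e k).2 then z k else 0) := by
      intro k
      by_cases h1 : u = (e k).1
      · have h2 : ¬ u = (e k).2 := by rw [h1]; exact hloop k
        simp [h1, h2, hloop k]
      · by_cases h2 : u = (e k).2 <;> simp [h1, h2, (hloop k).symm]
    rw [Finset.sum_congr rfl (fun k _ => key k), Finset.sum_sub_distrib] at h
    linarith
  have hout_le : ∀ u : Fin n, (∑ k, if u = (e k).1 then z k else 0) ≤ 1 := by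
    intro u
    have h := hBi u
    simp only [Matrix.mulVec, dotProduct, Bimat, ite_mul, one_mul, zero_mul] at h
    exact h
  have hin_le : ∀ u : Fin n, (∑ k, if u = (e k).2 then z k else 0) ≤ 1 := by
    intro u; rw [← hbal]; exact hout_le u
  -- two distinct unit entries force sum ≥ 2
  have two_le : ∀ (f : Fin m → ℤ), (∀ k, 0 ≤ f k) → ∀ a b : Fin m, a ≠ b →
      f a = 1 → f b = 1 → (2:ℤ) ≤ ∑ k, f k := by
    intro f hf a b hab ha hb
    have h2 : ∑ k ∈ ({a, b} : Finset (Fin m)), f k = 2 := by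
      rw [Finset.sum_pair hab, ha, hb]; norm_num
    rw [← h2]
    exact Finset.sum_le_sum_of_subset_of_nonneg (Finset.subset_univ _)
      (fun i _ _ => hf i)
  have huniq_out : ∀ a b : Fin m, z a = 1 → z b = 1 → (e a).1 = (e b).1 → a = b := by
    intro a b ha hb hee
    by_contra hab
    have h2 := two_le (fun k => if (e a).1 = (e k).1 then z k else 0)
      (fun k => by split <;> [exact hz0le k; exact le_rfl]) a b hab
      (by simp [ha]) (by simp [hee, hb])
    have := hout_le (e a).1
    linarith
  have huniq_in : ∀ a b : Fin m, z a = 1 → z b = 1 → (e a).2 = (e b).2 → a = b := by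
    intro a b ha hb hee
    by_contra hab
    have h2 := two_le (fun k => if (e a).2 = (e k).2 then z k else 0)
      (fun k => by split <;> [exact hz0le k; exact le_rfl]) a b hab
      (by simp [ha]) (by simp [hee, hb])
    have := hin_le (e a).2
    linarith
  -- successor edge
  have hnext : ∀ k, z k = 1 → ∃ k', z k' = 1 ∧ (e k').1 = (e k).2 := by
    intro k hk
    have hpos : (0:ℤ) < ∑ j, if (e k).2 = (e j).2 then z j else 0 := by
      have h1 : (1:ℤ) ≤ ∑ j, if (e k).2 = (e j).2 then z j else 0 := by
        have := Finset.single_le_sum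
          (f := fun j => if (e k).2 = (e j).2 then z j else 0)
          (fun j _ => by split <;> [exact hz0le j; exact le_rfl])
          (Finset.mem_univ k)
        simpa [hk] using this
      linarith
    rw [← hbal] at hpos
    obtain ⟨j, -, hj⟩ := Finset.exists_ne_zero_of_sum_ne_zero (ne_of_gt hpos)
    by_cases hc : (e k).2 = (e j).1
    · refine ⟨j, ?_, hc.symm⟩
      rcases hz01 j with h | h
      · exfalso; apply hj; rw [if_pos hc, h]
      · exact h
    · exfalso; apply hj; exact if_neg hc
  obtain ⟨k₀, hk₀'⟩ := Function.ne_iff.mp hzne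
  have hk₀ : z k₀ = 1 := by
    rcases hz01 k₀ with h | h
    · exact absurd (by simpa using h) hk₀'
    · exact h
  choose! g hg1 hg2 using hnext
  have hiter : ∀ t : ℕ, z (g^[t] k₀) = 1 := by
    intro t; induction t with
    | zero => simpa using hk₀
    | succ s ih => rw [Function.iterate_succ_apply']; exact hg1 _ ih
  have hginj : ∀ a b, z a = 1 → z b = 1 → g a = g b → a = b := by
    intro a b ha hb hgab
    exact huniq_in a b ha hb (by rw [← hg2 a ha, ← hg2 b hb, hgab])
  have hcancel : ∀ i j, i ≤ j → g^[i] k₀ = g^[j] k₀ → g^[j - i] k₀ = k₀ := by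
    intro i
    induction i with
    | zero => intro j _ h; simpa using h.symm
    | succ i ih =>
      intro j hij h
      obtain ⟨j', rfl⟩ : ∃ j', j = j' + 1 := ⟨j - 1, by omega⟩
      rw [Function.iterate_succ_apply', Function.iterate_succ_apply'] at h
      have h1 := hginj _ _ (hiter i) (hiter j') h
      have h2 := ih j' (by omega) h1
      simpa [Nat.succ_sub_succ] using h2
  have hper : ∃ p, 0 < p ∧ g^[p] k₀ = k₀ := by
    obtain ⟨i, j, hij, hijeq⟩ := Finite.exists_ne_map_eq_of_infinite (fun t : ℕ => g^[t] k₀)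
    rcases lt_or_gt_of_ne hij with h | h
    · exact ⟨j - i, by omega, hcancel i j h.le hijeq⟩
    · exact ⟨i - j, by omega, hcancel j i h.le hijeq.symm⟩
  set l := Nat.find hper with hldef
  have hls := Nat.find_spec hper
  have hl0 : 0 < l := hls.1
  have hlper : g^[l] k₀ = k₀ := hls.2
  have hlmin : ∀ p, 0 < p → p < l → g^[p] k₀ ≠ k₀ := by
    intro p hp hpl hpe; exact Nat.find_min hper hpl ⟨hp, hpe⟩
  set c : Fin l → Fin m := fun t => g^[t.1] k₀ with hcdef
  have hzc : ∀ t : Fin l, z (c t) = 1 := fun t => hiter t.1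
  have hcinj : Function.Injective c := by
    have key : ∀ a b : Fin l, a.1 ≤ b.1 → c a = c b → a = b := by
      intro a b hab hce
      have h1 := hcancel a.1 b.1 hab hce
      by_contra hne
      have hne' : a.1 ≠ b.1 := fun h => hne (Fin.ext h)
      exact hlmin (b.1 - a.1) (by omega) (by omega) h1
    intro a b hab
    rcases le_total a.1 b.1 with h | h
    · exact key a b h hab
    · exact (key b a h hab.symm).symm
  set v : Fin l → Fin n := fun t => (e (c t)).1 with hvdef
  have hvinj : Function.Injective v := fun a b hab =>
    hcinj (huniq_out _ _ (hzc a) (hzc b) hab)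
  have hedge : ∀ t : Fin l, e (c t) = (v t, v ⟨(t.1 + 1) % l, Nat.mod_lt _ (by omega)⟩) := by
    intro t
    have hstep : (e (c t)).2 = (e (g^[t.1+1] k₀)).1 := by
      rw [Function.iterate_succ_apply' g t.1 k₀]; exact (hg2 _ (hzc t)).symm
    have harg : c ⟨(t.1 + 1) % l, Nat.mod_lt _ (by omega)⟩ = g^[t.1+1] k₀ := by
      show g^[(t.1 + 1) % l] k₀ = g^[t.1+1] k₀
      rcases eq_or_lt_of_le (Nat.succ_le_of_lt t.2) with h | h
      · have h' : t.1 + 1 = l := h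
        have hm : (t.1 + 1) % l = 0 := by rw [h', Nat.mod_self]
        rw [hm, h']
        simpa using hlper.symm
      · rw [Nat.mod_eq_of_lt h]
    have h2 : (e (c t)).2 = v ⟨(t.1 + 1) % l, Nat.mod_lt _ (by omega)⟩ := by
      rw [hstep]
      exact (congrArg (fun x => (e x).1) harg).symm
    exact Prod.ext rfl h2
  have hl2 : 2 ≤ l := by
    by_contra h
    have hl1 : l = 1 := by omega
    have hgk : g k₀ = k₀ := by
      have := hlper; rw [hl1] at this; simpa using this
    have h1 := hg2 k₀ hk₀
    rw [hgk] at h1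
    exact hloop k₀ h1
  haveI : NeZero l := ⟨by omega⟩
  have hσ : ∀ t : Fin l, (⟨(t.1 + 1) % l, Nat.mod_lt _ (by omega)⟩ : Fin l) = t + 1 := by
    intro t
    apply Fin.ext
    simp only [Fin.add_def, Fin.val_one']
    rw [Nat.mod_eq_of_lt (by omega : 1 < l)]
  -- the candidate cycle indicator
  set z₁ : Fin m → ℤ := fun k => if k ∈ Finset.image c Finset.univ then 1 else 0 with hz₁def
  have hz₁B : (Bmat n m e).mulVec z₁ = 0 := by
    funext u
    simp only [Matrix.mulVec, dotProduct, Pi.zero_apply]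
    have step1 : ∀ k : Fin m, Bmat n m e u k * z₁ k
        = if k ∈ Finset.image c Finset.univ then Bmat n m e u k else 0 := by
      intro k
      show Bmat n m e u k * (if k ∈ Finset.image c Finset.univ then (1:ℤ) else 0) = _
      by_cases h : k ∈ Finset.image c Finset.univ
      · rw [if_pos h, if_pos h, mul_one]
      · rw [if_neg h, if_neg h, mul_zero]
    rw [Finset.sum_congr rfl fun k _ => step1 k]
    rw [Finset.sum_ite_mem, Finset.univ_inter]
    rw [Finset.sum_image (fun a _ b _ h => hcinj h)]
    have hBct : ∀ t : Fin l, Bmat n m e u (c t)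
        = (if u = v t then 1 else 0) - (if u = v (t + 1) then 1 else 0) := by
      intro t
      have hedge' := hedge t
      rw [hσ t] at hedge'
      have hne : v t ≠ v (t + 1) := by
        have h0 := hloop (c t)
        rw [hedge'] at h0
        exact h0
      simp only [Bmat, hedge']
      by_cases h1 : u = v t
      · have h2 : ¬ u = v (t+1) := by rw [h1]; exact hne
        simp [h1, h2, hne]
      · by_cases h2 : u = v (t+1) <;> simp [h1, h2, hne, hne.symm]
    rw [Finset.sum_congr rfl fun t _ => hBct t, Finset.sum_sub_distrib]
    have hre : ∑ t : Fin l, (if u = v (t + 1) then (1:ℤ) else 0)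
        = ∑ t : Fin l, (if u = v t then 1 else 0) :=
      Fintype.sum_equiv (Equiv.addRight (1 : Fin l)) _ _ (fun t => rfl)
    rw [hre, sub_self]
  have hk₀mem : k₀ ∈ Finset.image c Finset.univ := by
    refine Finset.mem_image.mpr ⟨⟨0, hl0⟩, Finset.mem_univ _, ?_⟩
    simp [hcdef]
  have hall : ∀ k, z k = 1 → k ∈ Finset.image c Finset.univ := by
    by_contra hall
    push_neg at hall
    obtain ⟨k₁, hk₁, hk₁n⟩ := hall
    apply hind
    have hz₁app : ∀ k, z₁ k = if k ∈ Finset.image c Finset.univ then 1 else 0 :=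
      fun k => rfl
    refine ⟨z₁, z - z₁, ?_, ?_, ?_, ?_, ?_, hz₁B, ?_⟩
    · intro k
      by_cases h : k ∈ Finset.image c Finset.univ
      · right; rw [hz₁app, if_pos h]
      · left; rw [hz₁app, if_neg h]
    · intro k
      by_cases h : k ∈ Finset.image c Finset.univ
      · obtain ⟨t, -, rfl⟩ := Finset.mem_image.mp h
        left
        rw [Pi.sub_apply, hz₁app, if_pos h, hzc t, sub_self]
      · rw [Pi.sub_apply, hz₁app, if_neg h, sub_zero]
        exact hz01 k
    · intro h
      have h0 := congrFun h k₀
      rw [hz₁app, if_pos hk₀mem] at h0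
      exact one_ne_zero h0
    · intro h
      have h0 := congrFun h k₁
      rw [Pi.sub_apply, hz₁app, if_neg hk₁n, sub_zero, hk₁] at h0
      exact one_ne_zero h0
    · funext k; simp
    · rw [Matrix.mulVec_sub, hBz, hz₁B, sub_zero]
  refine ⟨l, hl2, v, c, hvinj, hcinj, hedge, fun k => ⟨fun hk => ?_, fun ⟨t, ht⟩ => ht ▸ hzc t⟩⟩
  obtain ⟨t, -, ht⟩ := Finset.mem_image.mp (hall k hk)
  exact ⟨t, ht⟩
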